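/- For all x ≥ 0, (1 + x + x²/2) e^{-x} ≤ 2(√3 − 1) e^{-(√3−1)/2} (1 + x/2) e^{-x/2}, and hence (1 + x + x²/2) e^{-x} < 1.016 (1 + x/2) e^{-x/2}. -/

import Mathlib

open Real

/-- For all `x ≥ 0`,
`(1 + x + x²/2)e^{-x} ≤ 2(√3 − 1)e^{-(√3−1)/2}(1 + x/2)e^{-x/2}`, and hence
`(1 + x + x²/2)e^{-x} < 1.016 (1 + x/2)e^{-x/2}`. -/

lemma cub_lb {u : ℝ} (h1 : -1 ≤ u) (h0 : u ≤ 0) :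
    1 + u + u ^ 2 / 2 + 2 * u ^ 3 / 9 ≤ Real.exp u := by
  have habs : |u| ≤ 1 := abs_le.2 ⟨h1, h0.trans zero_le_one⟩
  have h := Real.exp_bound habs (n := 3) (by norm_num)
  have hsum : ∑ m ∈ Finset.range 3, u ^ m / m.factorial = 1 + u + u ^ 2 / 2 := by
    simp [Finset.sum_range_succ, Nat.factorial]
  rw [hsum] at h
  have habs3 : |u| ^ 3 = -u ^ 3 := by
    rw [abs_of_nonpos h0]; ring
  have h2 := (abs_sub_le_iff.1 h).2
  rw [habs3] at h2
  norm_num [Nat.factorial] at h2 ⊢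
  nlinarith [h2]

lemma cub_lb' {a : ℝ} (ha : 0 ≤ a) : 1 + a + a ^ 2 / 2 + a ^ 3 / 6 ≤ Real.exp a := by
  have h := Real.sum_le_exp_of_nonneg ha 4
  have hsum : ∑ m ∈ Finset.range 4, a ^ m / m.factorial = 1 + a + a ^ 2 / 2 + a ^ 3 / 6 := by
    simp [Finset.sum_range_succ, Nat.factorial]
  rwa [hsum] at h

lemma key (t : ℝ) (ht : 1 - Real.sqrt 3 ≤ t) :
    2 + Real.sqrt 3 * t + t ^ 2 / 2 ≤ (2 + (Real.sqrt 3 - 1) * t) * Real.exp (t / 2) := by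
  set s := Real.sqrt 3 with hs
  have hs2 : s ^ 2 = 3 := Real.sq_sqrt (by norm_num)
  have hs0 : 0 ≤ s := Real.sqrt_nonneg 3
  have hslb : 1.732 ≤ s := by nlinarith
  have hsub : s ≤ 1.7321 := by nlinarith
  rcases le_or_gt 0 t with h0 | h0
  · -- t ≥ 0 : use exp(t/2) ≥ (1+t/6)^3
    have hc : (1 + t / 6) ^ 3 ≤ Real.exp (t / 2) := by
      have h1 : Real.exp (t / 2) = Real.exp (t / 6) ^ 3 := by
        rw [← Real.exp_nat_mul]; norm_num; ring_nf
      rw [h1]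
      have h2 : 0 ≤ 1 + t / 6 := by linarith
      have h3 : 1 + t / 6 ≤ Real.exp (t / 6) := by
        have := Real.add_one_le_exp (t / 6); linarith
      exact pow_le_pow_left₀ h2 h3 3
    have hA : 0 ≤ 2 + (s - 1) * t := by nlinarith
    calc 2 + s * t + t ^ 2 / 2 ≤ (2 + (s - 1) * t) * (1 + t / 6) ^ 3 := by
          nlinarith [sq_nonneg t, pow_nonneg h0 3, pow_nonneg h0 4, sq_nonneg (t*t)]
      _ ≤ (2 + (s - 1) * t) * Real.exp (t / 2) := by
          exact mul_le_mul_of_nonneg_left hc hA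
  · -- t < 0 : use cubic Taylor lower bound at u = t/2
    have hu1 : -1 ≤ t / 2 := by nlinarith
    have hu0 : t / 2 ≤ 0 := by linarith
    have hc := cub_lb hu1 hu0
    have hc' : 1 + t / 2 + t ^ 2 / 8 + t ^ 3 / 36 ≤ Real.exp (t / 2) := by
      have : (t/2) ^ 2 / 2 = t ^ 2 / 8 := by ring
      nlinarith [hc]
    have hA : 0 ≤ 2 + (s - 1) * t := by nlinarith
    have h1 : (0:ℝ) ≤ t - (1 - s) := by linarith
    have hb : (0:ℝ) ≤ 1/18 + (s-1)/8 + (s-1)/36*t + (s-1)/36*(1-s) := by nlinarith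
    have hbr : (0:ℝ) ≤ (s-1)/2 - 1/4 + (1-s)*(1/18 + (s-1)/8) + (s-1)/36*(1-s)^2 := by nlinarith
    have hppos : (0:ℝ) ≤ t^2*(t-(1-s))*(1/18 + (s-1)/8 + (s-1)/36*t + (s-1)/36*(1-s)) :=
      mul_nonneg (mul_nonneg (sq_nonneg t) h1) hb
    calc 2 + s * t + t ^ 2 / 2 ≤ (2 + (s - 1) * t) * (1 + t / 2 + t ^ 2 / 8 + t ^ 3 / 36) := by
          nlinarith [hppos, mul_nonneg (sq_nonneg t) hbr]
      _ ≤ (2 + (s - 1) * t) * Real.exp (t / 2) := mul_le_mul_of_nonneg_left hc' hA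

theorem taylor_tail_second_order (x : ℝ) (hx : 0 ≤ x) :
    (1 + x + x ^ 2 / 2) * Real.exp (-x)
        ≤ 2 * (Real.sqrt 3 - 1) * Real.exp (-(Real.sqrt 3 - 1) / 2) *
          ((1 + x / 2) * Real.exp (-x / 2)) ∧
    (1 + x + x ^ 2 / 2) * Real.exp (-x) < 1.016 * ((1 + x / 2) * Real.exp (-x / 2)) := by
  set s := Real.sqrt 3 with hs
  have hs2 : s ^ 2 = 3 := Real.sq_sqrt (by norm_num)
  have hs0 : 0 ≤ s := Real.sqrt_nonneg 3
  have hslb : 1.732 ≤ s := by nlinarith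
  have hsub : s ≤ 1.7321 := by nlinarith
  set t := x - (s - 1) with htdef
  have hkey := key t (by simp only [htdef]; linarith)
  -- rewrite key in x form
  have e1 : (s - 1) * (2 + x) = 2 + (s - 1) * t := by
    simp only [htdef]; linear_combination hs2
  have e2 : 1 + x + x ^ 2 / 2 = 2 + s * t + t ^ 2 / 2 := by
    simp only [htdef]; linear_combination (1/2 : ℝ) * hs2
  have keyx : 1 + x + x ^ 2 / 2 ≤ (s - 1) * (2 + x) * Real.exp (t / 2) := by
    rw [e1, e2]; exact hkey
  have hee : Real.exp (-(s - 1) / 2) * Real.exp (-x / 2) = Real.exp (t / 2) * Real.exp (-x) := by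
    rw [← Real.exp_add, ← Real.exp_add]
    congr 1
    simp only [htdef]; ring
  have hexp : 2 * (s - 1) * Real.exp (-(s - 1) / 2) * ((1 + x / 2) * Real.exp (-x / 2))
      = (s - 1) * (2 + x) * Real.exp (t / 2) * Real.exp (-x) := by
    linear_combination ((s - 1) * (2 + x)) * hee
  have hpos : (0:ℝ) < Real.exp (-x) := Real.exp_pos _
  have part1 : (1 + x + x ^ 2 / 2) * Real.exp (-x)
      ≤ 2 * (s - 1) * Real.exp (-(s - 1) / 2) * ((1 + x / 2) * Real.exp (-x / 2)) := by
    rw [hexp]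
    exact mul_le_mul_of_nonneg_right keyx hpos.le
  refine ⟨part1, ?_⟩
  -- constant bound : 2(s-1)exp(-(s-1)/2) < 1.016
  have ha : (0:ℝ) ≤ (s - 1) / 2 := by linarith
  have hcub := cub_lb' ha
  have hply : (1:ℝ) + (s-1)/2 + ((s-1)/2)^2/2 + ((s-1)/2)^3/6 = 19/24 + 3*s/8 := by
    linear_combination (1/16 + s/48) * hs2
  rw [hply] at hcub
  have hplypos : (0:ℝ) < 19/24 + 3*s/8 := by linarith
  have hC : 2 * (s - 1) * Real.exp (-(s - 1) / 2) < 1.016 := by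
    have hexp2 : Real.exp (-(s - 1) / 2) = (Real.exp ((s - 1) / 2))⁻¹ := by
      rw [show -(s - 1) / 2 = -((s - 1) / 2) by ring, Real.exp_neg]
    rw [hexp2]
    have hEpos : (0:ℝ) < Real.exp ((s - 1) / 2) := Real.exp_pos _
    rw [mul_inv_lt_iff₀ hEpos]
    nlinarith [hcub]
  have hrpos : (0:ℝ) < (1 + x / 2) * Real.exp (-x / 2) := by positivity
  calc (1 + x + x ^ 2 / 2) * Real.exp (-x)
      ≤ 2 * (s - 1) * Real.exp (-(s - 1) / 2) * ((1 + x / 2) * Real.exp (-x / 2)) := part1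
    _ < 1.016 * ((1 + x / 2) * Real.exp (-x / 2)) := by
        exact mul_lt_mul_of_pos_right hC hrpos
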